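/- The moment matrices satisfy the integral recursion m^{(k)}(s,t) = k ∫_s^t P(s,x) R(x) m^{(k−1)}(x,t) dx + Σ_{m=2}^k C(k,m) ∫_s^t P(s,x) C^{(m)}(x) m^{(k−m)}(x,t) dx, where C^{(m)}(x) = D(x) ∘ B^{∘m}(x) and m^{(0)} = P. -/

import Mathlib

open Matrix MeasureTheory

attribute [local instance] Matrix.linftyOpNormedAddCommGroup Matrix.linftyOpNormedSpace
  Matrix.linftyOpNormedRing Matrix.linftyOpNormedAlgebra

open Set

lemma aux_semigroup {p : ℕ} {M : ℝ → Matrix (Fin p) (Fin p) ℝ}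
    {P : ℝ → ℝ → Matrix (Fin p) (Fin p) ℝ} (hM : Continuous M)
    (hP : ∀ s t : ℝ, HasDerivAt (fun u => P s u) (P s t * M t) t)
    (hP0 : ∀ s : ℝ, P s s = 1) (s x u : ℝ) :
    P s x * P x u = P s u := by
  set a : ℝ := min x u - 1 with ha
  set b : ℝ := max x u + 1 with hb
  have hax : a < x := by
    have := min_le_left x u; simp only [ha]; linarith
  have hxb : x < b := by
    have := le_max_left x u; simp only [hb]; linarith
  have hau : a < u := by
    have := min_le_right x u; simp only [ha]; linarith
  have hub : u < b := by
    have := le_max_right x u; simp only [hb]; linarith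
  obtain ⟨C, hC⟩ := (isCompact_Icc (a := a) (b := b)).exists_bound_of_continuousOn
    hM.continuousOn
  set c : ℝ → ℝ := fun r => max a (min b r) with hc
  have hcmem : ∀ r, c r ∈ Icc a b := by
    intro r
    constructor
    · exact le_max_left _ _
    · simp only [hc, max_le_iff]
      exact ⟨hax.le.trans hxb.le, min_le_left _ _⟩
  have hceq : ∀ r ∈ Icc a b, c r = r := by
    intro r hr
    simp only [hc]
    rw [min_eq_right hr.2, max_eq_right hr.1]
  set v : ℝ → Matrix (Fin p) (Fin p) ℝ → Matrix (Fin p) (Fin p) ℝ :=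
    fun r y => y * M (c r) with hv
  have hlip : ∀ r, LipschitzOnWith C.toNNReal (v r)
      (univ : Set (Matrix (Fin p) (Fin p) ℝ)) := by
    intro r
    refine LipschitzWith.lipschitzOnWith (LipschitzWith.of_dist_le_mul fun y z => ?_)
    rw [dist_eq_norm, dist_eq_norm, hv]
    simp only
    rw [← sub_mul]
    calc ‖(y - z) * M (c r)‖ ≤ ‖y - z‖ * ‖M (c r)‖ := norm_mul_le _ _
      _ ≤ ‖y - z‖ * C := by
          exact mul_le_mul_of_nonneg_left (hC _ (hcmem r)) (norm_nonneg _)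
      _ ≤ C.toNNReal * ‖y - z‖ := by
          rw [mul_comm]
          refine mul_le_mul_of_nonneg_right ?_ (norm_nonneg _)
          exact Real.le_coe_toNNReal C
  have hcontf : Continuous (fun r => P s r) :=
    continuous_iff_continuousAt.mpr fun r => (hP s r).continuousAt
  have hcontg : Continuous (fun r => P s x * P x r) :=
    continuous_const.mul (continuous_iff_continuousAt.mpr fun r => (hP x r).continuousAt)
  have key := ODE_solution_unique_of_mem_Icc (K := C.toNNReal) (v := v)
    (s := fun _ => (univ : Set (Matrix (Fin p) (Fin p) ℝ))) (fun r _ => hlip r)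
    (t₀ := x) (a := a) (b := b) ⟨hax, hxb⟩
    hcontf.continuousOn
    (fun r hr => by
      have := hP s r
      rw [hv]; simp only
      rw [hceq r ⟨hr.1.le, hr.2.le⟩]
      exact this)
    (fun _ _ => trivial)
    hcontg.continuousOn
    (fun r hr => by
      have := (hP x r).const_mul (P s x)
      rw [hv]; simp only
      rw [hceq r ⟨hr.1.le, hr.2.le⟩, mul_assoc]
      exact this)
    (fun _ _ => trivial)
    (by simp [hP0])
  exact (key ⟨hau.le, hub.le⟩).symm

lemma aux_contP1 {p : ℕ} {M : ℝ → Matrix (Fin p) (Fin p) ℝ}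
    {P : ℝ → ℝ → Matrix (Fin p) (Fin p) ℝ} (hM : Continuous M)
    (hP : ∀ s t : ℝ, HasDerivAt (fun u => P s u) (P s t * M t) t)
    (hP0 : ∀ s : ℝ, P s s = 1) (t : ℝ) :
    Continuous (fun x => P x t) := by
  have hsg := aux_semigroup hM hP hP0
  have hinv : ∀ x : ℝ, P x 0 * P 0 x = 1 := by
    intro x; rw [hsg x 0 x, hP0]
  have heq : (fun x => P x t) = fun x => (P 0 x)⁻¹ * P 0 t := by
    funext x
    rw [Matrix.inv_eq_left_inv (hinv x), hsg x 0 t]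
  rw [heq]
  have hcont0 : Continuous (fun x : ℝ => P 0 x) :=
    continuous_iff_continuousAt.mpr fun r => (hP 0 r).continuousAt
  refine Continuous.mul ?_ continuous_const
  refine continuous_iff_continuousAt.mpr fun x => ?_
  have hdet : IsUnit (P 0 x).det := Matrix.isUnit_det_of_left_inverse (hinv x)
  have h1 : ContinuousAt Ring.inverse (P 0 x).det := by
    rw [Ring.inverse_eq_inv']
    exact continuousAt_inv₀ hdet.ne_zero
  exact (continuousAt_matrix_inv (P 0 x) h1).comp hcont0.continuousAt

/-- The moment matrices of the Markov reward process satisfy the integral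
recursion `m⁽ᵏ⁾ (s,t) = k ∫_s^t P (s,x) R x m⁽ᵏ⁻¹⁾ (x,t) dx +
∑_{j=2}^k C(k,j) ∫_s^t P (s,x) C⁽ʲ⁾ x m⁽ᵏ⁻ʲ⁾ (x,t) dx`, where `m⁽⁰⁾ = P` is the transition
matrix (the product integral of the intensity `M`) and the `m⁽ᵏ⁾` satisfy the backward
differential equation with terminal condition `m⁽ᵏ⁾ (t,t) = 0` for `k ≥ 1`. -/
theorem moment_matrices_integral_recursion {p : ℕ}
    (M R : ℝ → Matrix (Fin p) (Fin p) ℝ) (Cm : ℕ → ℝ → Matrix (Fin p) (Fin p) ℝ)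
    (hM : Continuous M) (hR : Continuous R) (hCm : ∀ j, Continuous (Cm j))
    (P : ℝ → ℝ → Matrix (Fin p) (Fin p) ℝ)
    (hP : ∀ s t : ℝ, HasDerivAt (fun u => P s u) (P s t * M t) t)
    (hP0 : ∀ s : ℝ, P s s = 1)
    (m : ℕ → ℝ → ℝ → Matrix (Fin p) (Fin p) ℝ)
    (hm0 : ∀ s t : ℝ, m 0 s t = P s t)
    (hmT : ∀ (k : ℕ), 1 ≤ k → ∀ t : ℝ, m k t t = 0)
    (hODE : ∀ (k : ℕ), 1 ≤ k → ∀ s t : ℝ,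
      HasDerivAt (fun s' => m k s' t)
        (-(M s * m k s t + (k : ℝ) • (R s * m (k - 1) s t) +
            ∑ j ∈ Finset.Icc 2 k, (k.choose j : ℝ) • (Cm j s * m (k - j) s t))) s) :
    ∀ (k : ℕ), 1 ≤ k → ∀ s t : ℝ, s ≤ t →
      m k s t = (k : ℝ) • (∫ x in s..t, P s x * R x * m (k - 1) x t) +
        ∑ j ∈ Finset.Icc 2 k,
          (k.choose j : ℝ) • ∫ x in s..t, P s x * Cm j x * m (k - j) x t := by
  intro k hk s t hst
  -- continuity of x ↦ m j x t
  have hmc : ∀ (j : ℕ) (t : ℝ), Continuous (fun x => m j x t) := by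
    intro j t
    rcases Nat.eq_zero_or_pos j with hj | hj
    · subst hj
      simpa only [hm0] using aux_contP1 hM hP hP0 t
    · exact continuous_iff_continuousAt.mpr fun x => (hODE j hj x t).continuousAt
  have hcontPs : Continuous (fun x => P s x) :=
    continuous_iff_continuousAt.mpr fun r => (hP s r).continuousAt
  set A : ℝ → Matrix (Fin p) (Fin p) ℝ := fun x => P s x * R x * m (k - 1) x t with hA
  set B : ℕ → ℝ → Matrix (Fin p) (Fin p) ℝ :=
    fun j x => P s x * Cm j x * m (k - j) x t with hB
  set F : ℝ → Matrix (Fin p) (Fin p) ℝ :=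
    fun x => (k : ℝ) • A x + ∑ j ∈ Finset.Icc 2 k, (k.choose j : ℝ) • B j x with hF
  have hcontA : Continuous A := (hcontPs.mul hR).mul (hmc (k - 1) t)
  have hcontB : ∀ j, Continuous (B j) := fun j =>
    (hcontPs.mul (hCm j)).mul (hmc (k - j) t)
  have hcontF : Continuous F := by
    refine (hcontA.const_smul (k:ℝ)).add ?_
    exact continuous_finset_sum _ fun j _ => (hcontB j).const_smul (k.choose j : ℝ)
  -- derivative of g x = P s x * m k x t
  have hg' : ∀ x : ℝ, HasDerivAt (fun x => P s x * m k x t) (-F x) x := by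
    intro x
    have h := (hP s x).mul (hODE k hk x t)
    refine h.congr_deriv ?_
    symm
    rw [hF]
    simp only [hA, hB, mul_neg, mul_add, Finset.mul_sum, mul_smul_comm, mul_assoc]
    abel
  have hftc : (∫ x in s..t, -F x) =
      P s t * m k t t - P s s * m k s t := by
    exact intervalIntegral.integral_eq_sub_of_hasDerivAt (fun x _ => hg' x)
      (hcontF.neg.intervalIntegrable s t)
  rw [hmT k hk t, mul_zero, hP0, one_mul, intervalIntegral.integral_neg, zero_sub,
    neg_inj] at hftc
  rw [← hftc, hF]
  rw [intervalIntegral.integral_add ?hintA ?hintS, intervalIntegral.integral_smul,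
    intervalIntegral.integral_finset_sum
      (fun j _ => by exact ((hcontB j).const_smul (k.choose j : ℝ)).intervalIntegrable s t)]
  simp only [intervalIntegral.integral_smul]
  rfl
  case hintA => exact (hcontA.const_smul (k:ℝ)).intervalIntegrable s t
  case hintS =>
    exact (continuous_finset_sum _ fun j _ =>
      (hcontB j).const_smul (k.choose j : ℝ)).intervalIntegrable s t
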